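/- arXiv:1008.3168 — 2 statements merged into one kernel-verified Lean document; each statement's English description precedes it below -/
import Mathlib

section
/- Let 0 < h ≤ 1 and m_h(ξ) = exp(-ξ²/4)/∑_{k∈ℤ} exp(-(ξ-2πk/h)²/4). There is an absolute constant C (depending only on universal constants) such that for every integer k̃ ≥ 1 and every ξ ∈ [2π(k̃-1)/h, 2πk̃/h], one has |m_h''(ξ)| ≤ C (k̃/h)² m_h(ξ). -/
open Real

noncomputable section GaussianMultiplierAux

/-- the term function -/
def gk (a : ℝ) (k : ℤ) (x : ℝ) : ℝ := Real.exp (a * k / 2 * x - (a * k / 2) ^ 2)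

lemma gk_pos (a : ℝ) (k : ℤ) (x : ℝ) : 0 < gk a k x := Real.exp_pos _

lemma gk_eq (a : ℝ) (k : ℤ) (x : ℝ) :
    gk a k x = Real.exp (x ^ 2 / 4) * Real.exp (-(x - a * k) ^ 2 / 4) := by
  rw [gk, ← Real.exp_add]
  congr 1
  ring

lemma summable_exp_neg_abs : Summable fun j : ℤ => Real.exp (-|(j : ℝ)|) := by
  have hlt : Real.exp (-1) < 1 := by
    have h := Real.exp_lt_exp.mpr (show (-1 : ℝ) < 0 by norm_num)
    simpa using h
  have hgeom : Summable fun n : ℕ => Real.exp (-1) ^ n :=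
    summable_geometric_of_lt_one (Real.exp_nonneg _) hlt
  have key : Summable fun n : ℕ => Real.exp (-(n : ℝ)) := by
    refine hgeom.congr fun n => ?_
    rw [← Real.exp_nat_mul]
    ring_nf
  apply Summable.of_nat_of_neg
  · refine key.congr fun n => ?_
    congr 1
    simp [abs_of_nonneg]
  · refine key.congr fun n => ?_
    congr 1
    push_cast
    simp [abs_of_nonneg]

def cT : ℝ := ∑' j : ℤ, Real.exp (-|(j : ℝ)|)

lemma one_le_cT : 1 ≤ cT := by
  have h := Summable.le_tsum summable_exp_neg_abs 0 (fun j _ => (Real.exp_pos _).le)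
  simpa [cT] using h

lemma cT_pos : 0 < cT := lt_of_lt_of_le one_pos one_le_cT


/-- the uniform majorant is summable -/
lemma summable_majorant (a R : ℝ) (ha : 2 * π ≤ a) (hR : 0 ≤ R) (n : ℕ) :
    Summable fun k : ℤ => |a * k / 2| ^ n * Real.exp (|a * k / 2| * R - (a * k / 2) ^ 2) := by
  have hπ := Real.pi_gt_three
  have hapos : (0 : ℝ) < a := by nlinarith
  apply Summable.of_norm_bounded_eventually (g := fun j : ℤ => Real.exp (-|(j : ℝ)|))
    summable_exp_neg_abs
  rw [Filter.eventually_cofinite]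
  apply Set.Finite.subset (Set.finite_Icc (-⌈R + n + 1⌉ : ℤ) ⌈R + n + 1⌉)
  intro k hk
  simp only [Set.mem_setOf_eq] at hk
  rw [Set.mem_Icc]
  by_contra hcon
  apply hk
  -- from hcon : |k| large
  have hk' : R + (n : ℝ) + 1 ≤ |(k : ℝ)| := by
    have h1 : (⌈R + (n : ℝ) + 1⌉ : ℤ) < |k| := by
      rcases not_and_or.mp hcon with h | h
      · push_neg at h
        calc (⌈R + (n : ℝ) + 1⌉ : ℤ) < -k := by omega
          _ ≤ |k| := by rw [abs_eq_max_neg]; exact le_max_right _ _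
      · push_neg at h
        exact lt_of_lt_of_le h (le_abs_self k)
    have h2 : R + (n : ℝ) + 1 ≤ (⌈R + (n : ℝ) + 1⌉ : ℤ) := Int.le_ceil _
    have h3 : ((⌈R + (n : ℝ) + 1⌉ : ℤ) : ℝ) ≤ (|k| : ℤ) := by exact_mod_cast h1.le
    rw [Int.cast_abs] at h3
    linarith
  set t : ℝ := |a * k / 2| with ht
  have htk : π * |(k : ℝ)| ≤ t := by
    rw [ht, abs_div, abs_mul, abs_of_pos hapos]
    rw [show |(2 : ℝ)| = 2 by norm_num]
    have : 2 * π * |(k : ℝ)| ≤ a * |(k : ℝ)| :=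
      mul_le_mul_of_nonneg_right ha (abs_nonneg _)
    linarith
  have hk0 : (0 : ℝ) ≤ |(k : ℝ)| := abs_nonneg _
  have ht0 : (0 : ℝ) ≤ t := abs_nonneg _
  have htbig : R + (n : ℝ) + 1 ≤ t := by nlinarith
  have htk2 : |(k : ℝ)| ≤ t := by nlinarith
  -- now the bound
  have hb1 : t ^ n ≤ Real.exp ((n : ℝ) * t) := by
    calc t ^ n ≤ Real.exp t ^ n := by
          apply pow_le_pow_left₀ ht0
          linarith [Real.add_one_le_exp t]
      _ = Real.exp ((n : ℝ) * t) := by rw [← Real.exp_nat_mul]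
  have key : t ^ n * Real.exp (t * R - t ^ 2) ≤ Real.exp (-|(k : ℝ)|) := by
    calc t ^ n * Real.exp (t * R - t ^ 2)
        ≤ Real.exp ((n : ℝ) * t) * Real.exp (t * R - t ^ 2) :=
          mul_le_mul_of_nonneg_right hb1 (Real.exp_nonneg _)
      _ = Real.exp ((n : ℝ) * t + (t * R - t ^ 2)) := by rw [← Real.exp_add]
      _ ≤ Real.exp (-t) := by
          apply Real.exp_le_exp.mpr
          nlinarith
      _ ≤ Real.exp (-|(k : ℝ)|) := by
          apply Real.exp_le_exp.mpr
          linarith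
  rw [show (a * k / 2) ^ 2 = t ^ 2 from (sq_abs _).symm]
  calc ‖t ^ n * Real.exp (t * R - t ^ 2)‖
      = t ^ n * Real.exp (t * R - t ^ 2) := by
        rw [Real.norm_eq_abs, abs_of_nonneg (by positivity)]
    _ ≤ Real.exp (-|(k : ℝ)|) := key


lemma gk_le_majorant (a : ℝ) (n : ℕ) (k : ℤ) {x R : ℝ} (hx : |x| ≤ R) :
    |a * k / 2| ^ n * gk a k x ≤ |a * k / 2| ^ n * Real.exp (|a * k / 2| * R - (a * k / 2) ^ 2) := by
  apply mul_le_mul_of_nonneg_left _ (by positivity)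
  rw [gk]
  apply Real.exp_le_exp.mpr
  have h1 : a * k / 2 * x ≤ |a * k / 2| * R := by
    calc a * k / 2 * x ≤ |a * k / 2 * x| := le_abs_self _
      _ = |a * k / 2| * |x| := abs_mul _ _
      _ ≤ |a * k / 2| * R := mul_le_mul_of_nonneg_left hx (abs_nonneg _)
  linarith

lemma summable_gk_pow (a : ℝ) (ha : 2 * π ≤ a) (n : ℕ) (x : ℝ) :
    Summable fun k : ℤ => |a * k / 2| ^ n * gk a k x :=
  Summable.of_nonneg_of_le (fun k => mul_nonneg (by positivity) (gk_pos a k x).le)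
    (fun k => gk_le_majorant a n k (le_refl |x|))
    (summable_majorant a |x| ha (abs_nonneg x) n)

lemma summable_gk (a : ℝ) (ha : 2 * π ≤ a) (x : ℝ) : Summable fun k : ℤ => gk a k x := by
  have h := summable_gk_pow a ha 0 x
  refine h.congr fun k => ?_
  simp

lemma summable_gk_one (a : ℝ) (ha : 2 * π ≤ a) (x : ℝ) :
    Summable fun k : ℤ => |a * k / 2| * gk a k x := by
  have h := summable_gk_pow a ha 1 x
  refine h.congr fun k => ?_
  simp

lemma summable_gk_lin (a : ℝ) (ha : 2 * π ≤ a) (x : ℝ) :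
    Summable fun k : ℤ => (a * k / 2) * gk a k x := by
  apply Summable.of_norm_bounded (summable_gk_one a ha x)
  intro k
  rw [Real.norm_eq_abs, abs_mul, abs_of_pos (gk_pos _ _ _)]

lemma summable_gk_sq (a : ℝ) (ha : 2 * π ≤ a) (x : ℝ) :
    Summable fun k : ℤ => (a * k / 2) ^ 2 * gk a k x := by
  have h := summable_gk_pow a ha 2 x
  refine h.congr fun k => ?_
  rw [sq_abs]

def Fg (a x : ℝ) : ℝ := ∑' k : ℤ, gk a k x
def Fg1 (a x : ℝ) : ℝ := ∑' k : ℤ, (a * k / 2) * gk a k x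
def Fg2 (a x : ℝ) : ℝ := ∑' k : ℤ, (a * k / 2) ^ 2 * gk a k x

lemma one_le_Fg (a : ℝ) (ha : 2 * π ≤ a) (x : ℝ) : 1 ≤ Fg a x := by
  have h := Summable.le_tsum (summable_gk a ha x) 0 (fun j _ => (Real.exp_pos _).le)
  simpa [gk, Fg] using h

lemma Fg_pos (a : ℝ) (ha : 2 * π ≤ a) (x : ℝ) : 0 < Fg a x :=
  lt_of_lt_of_le one_pos (one_le_Fg a ha x)

lemma Fg2_nonneg (a x : ℝ) : 0 ≤ Fg2 a x :=
  tsum_nonneg fun k => mul_nonneg (sq_nonneg _) (gk_pos _ _ _).le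

lemma hasDerivAt_gk (a : ℝ) (k : ℤ) (y : ℝ) :
    HasDerivAt (gk a k) (a * k / 2 * gk a k y) y := by
  have h1 : HasDerivAt (fun x : ℝ => a * k / 2 * x - (a * k / 2) ^ 2) (a * k / 2) y := by
    have h0 := ((hasDerivAt_id y).const_mul (a * (k : ℝ) / 2)).sub_const ((a * (k : ℝ) / 2) ^ 2)
    simpa only [mul_one, id_eq] using h0
  have h2 := h1.exp
  rw [show a * (k : ℝ) / 2 * gk a k y = gk a k y * (a * (k : ℝ) / 2) from mul_comm _ _]
  exact h2

lemma mem_ioo_self (x : ℝ) : x ∈ Set.Ioo (-(|x| + 1)) (|x| + 1) :=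
  ⟨by linarith [neg_abs_le x], by linarith [le_abs_self x]⟩

lemma hasDerivAt_Fg (a : ℝ) (ha : 2 * π ≤ a) (x : ℝ) :
    HasDerivAt (Fg a) (Fg1 a x) x := by
  have h := hasDerivAt_tsum_of_isPreconnected
    (summable_majorant a (|x| + 1) ha (by positivity) 1)
    isOpen_Ioo isPreconnected_Ioo
    (fun (k : ℤ) (y : ℝ) (_ : y ∈ Set.Ioo (-(|x| + 1)) (|x| + 1)) => hasDerivAt_gk a k y)
    (fun k y hy => ?_) (mem_ioo_self x) (summable_gk a ha x) (mem_ioo_self x)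
  · exact h
  · have hyb : |y| ≤ |x| + 1 := by
      rw [abs_le]
      exact ⟨hy.1.le, hy.2.le⟩
    have := gk_le_majorant a 1 k hyb
    rw [pow_one] at this
    calc ‖a * k / 2 * gk a k y‖ = |a * k / 2| * gk a k y := by
          rw [Real.norm_eq_abs, abs_mul, abs_of_pos (gk_pos _ _ _)]
      _ ≤ |a * k / 2| ^ 1 * Real.exp (|a * k / 2| * (|x| + 1) - (a * k / 2) ^ 2) := by
          rw [pow_one]; exact this

lemma hasDerivAt_Fg1 (a : ℝ) (ha : 2 * π ≤ a) (x : ℝ) :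
    HasDerivAt (Fg1 a) (Fg2 a x) x := by
  have hterm : ∀ (k : ℤ) (y : ℝ),
      HasDerivAt (fun z => (a * k / 2) * gk a k z) ((a * k / 2) ^ 2 * gk a k y) y := by
    intro k y
    have h := (hasDerivAt_gk a k y).const_mul (a * k / 2)
    have he : a * k / 2 * (a * k / 2 * gk a k y) = (a * k / 2) ^ 2 * gk a k y := by ring
    rwa [he] at h
  have h := hasDerivAt_tsum_of_isPreconnected
    (summable_majorant a (|x| + 1) ha (by positivity) 2)
    isOpen_Ioo isPreconnected_Ioo
    (fun (k : ℤ) (y : ℝ) (_ : y ∈ Set.Ioo (-(|x| + 1)) (|x| + 1)) => hterm k y)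
    (fun k y hy => ?_) (mem_ioo_self x) (summable_gk_lin a ha x) (mem_ioo_self x)
  · exact h
  · have hyb : |y| ≤ |x| + 1 := by
      rw [abs_le]
      exact ⟨hy.1.le, hy.2.le⟩
    have := gk_le_majorant a 2 k hyb
    calc ‖(a * k / 2) ^ 2 * gk a k y‖ = |a * k / 2| ^ 2 * gk a k y := by
          rw [Real.norm_eq_abs, abs_mul, abs_of_pos (gk_pos _ _ _), abs_of_nonneg (sq_nonneg _), ← sq_abs]
      _ ≤ |a * k / 2| ^ 2 * Real.exp (|a * k / 2| * (|x| + 1) - (a * k / 2) ^ 2) := this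


/-- exponent comparison: concentration of shifted Gaussian weights -/
lemma expA (a u : ℝ) (j : ℤ) (ha : 2 * π ≤ a) (hu : |u| ≤ a / 2) :
    Real.exp (-(u - a * j) ^ 2 / 4) ≤
      Real.exp (4 * π ^ 2) * Real.exp (-(4 * |(j : ℝ)|)) * Real.exp (-u ^ 2 / 4) := by
  have hπ := Real.pi_gt_three
  have hapos : (0 : ℝ) < a := by nlinarith
  rw [← Real.exp_add, ← Real.exp_add]
  apply Real.exp_le_exp.mpr
  set n : ℝ := |(j : ℝ)| with hn
  have hn0 : 0 ≤ n := abs_nonneg _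
  have hn2 : n ^ 2 = (j : ℝ) ^ 2 := sq_abs _
  have hju : 2 * a * j * u ≤ a ^ 2 * n := by
    have h1 : |2 * a * (j : ℝ) * u| = 2 * a * n * |u| := by
      rw [abs_mul, abs_mul, abs_mul]
      rw [abs_of_pos hapos, show |(2 : ℝ)| = 2 by norm_num]
    have h2 : 2 * a * n * |u| ≤ 2 * a * n * (a / 2) :=
      mul_le_mul_of_nonneg_left hu (by positivity)
    have h3 := le_abs_self (2 * a * (j : ℝ) * u)
    nlinarith
  -- goal : -(u - a j)^2/4 ≤ 4π² + (-(4n)) + (-(u²/4))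
  have hcore : a ^ 2 * (n ^ 2 - n) ≥ 16 * n - 16 * π ^ 2 := by
    rcases eq_or_lt_of_le hn0 with h0 | h0
    · simp [← h0]
      positivity
    · have h1 : 1 ≤ n := by
        have : j ≠ 0 := by
          intro hj
          rw [hj] at hn
          simp at hn
          exact h0.ne hn.symm
        have h2 : (1 : ℤ) ≤ |j| := Int.one_le_abs this
        have h3 : (1 : ℝ) ≤ |(j : ℝ)| := by exact_mod_cast h2
        rw [hn]; exact h3
      have ha2 : 4 * π ^ 2 ≤ a ^ 2 := by nlinarith
      have h4 : n ^ 2 - n ≥ n - 1 := by nlinarith [sq_nonneg (n - 1)]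
      have h5 : a ^ 2 * (n ^ 2 - n) ≥ 4 * π ^ 2 * (n - 1) := by nlinarith
      have hπ2 : (9 : ℝ) ≤ π ^ 2 := by nlinarith
      nlinarith [mul_nonneg (show (0:ℝ) ≤ 4 * π ^ 2 - 16 by nlinarith) hn0]
  nlinarith

lemma key_helper (ξ t K a X E4 eN e4n eu e1 : ℝ)
    (hξ1 : 0 ≤ ξ) (hξ2 : ξ ≤ K) (hK : a ≤ K) (ha : 0 < a)
    (ht : t ^ 2 ≤ 3 * a ^ 2 * (eN * eN))
    (hX : X ≤ E4 * e4n * eu) (hX0 : 0 ≤ X)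
    (h1 : eN * eN * e4n ≤ e1) (h2 : e4n ≤ e1)
    (hE4 : 0 ≤ E4) (heN : 0 ≤ eN) (he4n : 0 ≤ e4n) (heu : 0 ≤ eu) (he1 : 0 ≤ e1) :
    ((ξ - t) / 2) ^ 2 * X ≤ 8 * E4 * (K / 2) ^ 2 * e1 * eu := by
  have haK2 : a ^ 2 ≤ K ^ 2 := by nlinarith
  calc ((ξ - t) / 2) ^ 2 * X
      ≤ (K ^ 2 / 2 + 3 * a ^ 2 * (eN * eN) / 2) * X := by
        apply mul_le_mul_of_nonneg_right _ hX0
        nlinarith [sq_nonneg (ξ + t)]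
    _ ≤ (K ^ 2 / 2 + 3 * a ^ 2 * (eN * eN) / 2) * (E4 * e4n * eu) := by
        apply mul_le_mul_of_nonneg_left hX
        have : 0 ≤ a ^ 2 * (eN * eN) := by positivity
        nlinarith
    _ = E4 * eu * (K ^ 2 / 2 * e4n) + E4 * eu * (3 * a ^ 2 / 2 * (eN * eN * e4n)) := by
        ring
    _ ≤ E4 * eu * (K ^ 2 / 2 * e1) + E4 * eu * (3 * K ^ 2 / 2 * e1) := by
        apply add_le_add
        · apply mul_le_mul_of_nonneg_left _ (by positivity)
          apply mul_le_mul_of_nonneg_left h2 (by positivity)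
        · apply mul_le_mul_of_nonneg_left _ (by positivity)
          apply mul_le_mul (by linarith) h1 (by positivity) (by positivity)
    _ = 8 * E4 * (K / 2) ^ 2 * e1 * eu := by ring

lemma key_term (a u ξ K : ℝ) (j : ℤ) (ha : 2 * π ≤ a) (hu : |u| ≤ a / 2)
    (hK : a ≤ K) (hξ1 : 0 ≤ ξ) (hξ2 : ξ ≤ K) :
    ((ξ - (u - a * j)) / 2) ^ 2 * Real.exp (-(u - a * j) ^ 2 / 4) ≤
      8 * Real.exp (4 * π ^ 2) * (K / 2) ^ 2 * Real.exp (-|(j : ℝ)|) *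
        Real.exp (-u ^ 2 / 4) := by
  have hπ := Real.pi_gt_three
  have hapos : (0 : ℝ) < a := by nlinarith
  have hn0 : (0 : ℝ) ≤ |(j : ℝ)| := abs_nonneg _
  have hn2 : |(j : ℝ)| ^ 2 = (j : ℝ) ^ 2 := sq_abs _
  have hu2 : u ^ 2 ≤ a ^ 2 / 4 := by
    have h1 := abs_le.mp hu
    nlinarith [sq_abs u, abs_nonneg u]
  have hju : -(a ^ 2 * |(j : ℝ)|) ≤ 2 * a * j * u := by
    have h1 : |2 * a * (j : ℝ) * u| = 2 * a * |(j : ℝ)| * |u| := by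
      rw [abs_mul, abs_mul, abs_mul]
      rw [abs_of_pos hapos, show |(2 : ℝ)| = 2 by norm_num]
    have h2 : 2 * a * |(j : ℝ)| * |u| ≤ 2 * a * |(j : ℝ)| * (a / 2) :=
      mul_le_mul_of_nonneg_left hu (by positivity)
    have h3 := neg_abs_le (2 * a * (j : ℝ) * u)
    nlinarith
  have hE : (|(j : ℝ)| + 1) * (|(j : ℝ)| + 1) ≤ Real.exp |(j : ℝ)| * Real.exp |(j : ℝ)| :=
    mul_le_mul (Real.add_one_le_exp _) (Real.add_one_le_exp _) (by positivity)
      (Real.exp_pos _).le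
  have h2 : (u - a * j) ^ 2 ≤ 3 * a ^ 2 * (Real.exp |(j : ℝ)| * Real.exp |(j : ℝ)|) := by
    nlinarith [mul_le_mul_of_nonneg_left hE (show (0:ℝ) ≤ 3 * a ^ 2 by positivity)]
  have hE1 : Real.exp |(j : ℝ)| * Real.exp |(j : ℝ)| * Real.exp (-(4 * |(j : ℝ)|)) ≤
      Real.exp (-|(j : ℝ)|) := by
    rw [← Real.exp_add, ← Real.exp_add]
    apply Real.exp_le_exp.mpr
    linarith
  have hE2 : Real.exp (-(4 * |(j : ℝ)|)) ≤ Real.exp (-|(j : ℝ)|) :=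
    Real.exp_le_exp.mpr (by linarith)
  exact key_helper ξ (u - a * j) K a _ _ _ _ _ _ hξ1 hξ2 hK hapos h2
    (expA a u j ha hu) (Real.exp_pos _).le hE1 hE2 (Real.exp_pos _).le
    (Real.exp_pos _).le (Real.exp_pos _).le (Real.exp_pos _).le (Real.exp_pos _).le

lemma moment2 (a : ℝ) (ha : 2 * π ≤ a) (kt : ℕ) (hkt : 1 ≤ kt) (ξ : ℝ)
    (hl : a * ((kt : ℝ) - 1) ≤ ξ) (hr : ξ ≤ a * kt) :
    Fg2 a ξ ≤ (8 * Real.exp (4 * π ^ 2) * cT) * (a * kt / 2) ^ 2 * Fg a ξ := by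
  have hπ := Real.pi_gt_three
  have hapos : (0 : ℝ) < a := by nlinarith
  have hkt1 : (1 : ℝ) ≤ (kt : ℝ) := by exact_mod_cast hkt
  set k₀ : ℤ := if ξ ≤ a * kt - a / 2 then (kt : ℤ) - 1 else (kt : ℤ) with hk₀
  have hu2 : |ξ - a * k₀| ≤ a / 2 := by
    rw [hk₀]
    split_ifs with hc
    · push_cast
      rw [abs_le]
      constructor <;> nlinarith
    · push_cast
      rw [abs_le]
      push_neg at hc
      constructor <;> nlinarith
  have hξ0 : 0 ≤ ξ := by nlinarith
  have hξK : ξ ≤ a * kt := hr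
  have haK : a ≤ a * kt := by nlinarith
  -- the per-term bound, after reindexing k = k₀ + j
  have key : ∀ j : ℤ, (a * ((k₀ + j : ℤ) : ℝ) / 2) ^ 2 * gk a (k₀ + j) ξ ≤
      (8 * Real.exp (4 * π ^ 2) * (a * kt / 2) ^ 2 * gk a k₀ ξ) * Real.exp (-|(j : ℝ)|) := by
    intro j
    have hterm := key_term a (ξ - a * k₀) ξ (a * kt) j ha hu2 haK hξ0 hξK
    rw [gk_eq, gk_eq]
    have e1 : (a * ((k₀ + j : ℤ) : ℝ) / 2) ^ 2 = ((ξ - (ξ - a * k₀ - a * j)) / 2) ^ 2 := by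
      push_cast
      ring_nf
    have e2 : ξ - a * ((k₀ + j : ℤ) : ℝ) = ξ - a * k₀ - a * j := by
      push_cast
      ring
    rw [e1, e2]
    have e3 : ξ - a * (k₀ : ℝ) = ξ - a * k₀ := rfl
    -- now multiply hterm by exp(ξ²/4) ≥ 0
    have h4 := mul_le_mul_of_nonneg_left hterm (Real.exp_nonneg (ξ ^ 2 / 4))
    calc ((ξ - (ξ - a * k₀ - a * j)) / 2) ^ 2 *
          (Real.exp (ξ ^ 2 / 4) * Real.exp (-(ξ - a * k₀ - a * j) ^ 2 / 4))
        = Real.exp (ξ ^ 2 / 4) * (((ξ - (ξ - a * ↑k₀ - a * ↑j)) / 2) ^ 2 *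
            Real.exp (-(ξ - a * ↑k₀ - a * ↑j) ^ 2 / 4)) := by ring
      _ ≤ Real.exp (ξ ^ 2 / 4) * (8 * Real.exp (4 * π ^ 2) * (a * ↑kt / 2) ^ 2 *
            Real.exp (-|(j : ℝ)|) * Real.exp (-(ξ - a * ↑k₀) ^ 2 / 4)) := h4
      _ = 8 * Real.exp (4 * π ^ 2) * (a * ↑kt / 2) ^ 2 *
            (Real.exp (ξ ^ 2 / 4) * Real.exp (-(ξ - a * ↑k₀) ^ 2 / 4)) *
            Real.exp (-|(j : ℝ)|) := by ring
  -- summability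
  have SL : Summable fun k : ℤ => (a * k / 2) ^ 2 * gk a k ξ := summable_gk_sq a ha ξ
  have SLj : Summable fun j : ℤ => (a * ((k₀ + j : ℤ) : ℝ) / 2) ^ 2 * gk a (k₀ + j) ξ := by
    have := (Equiv.addLeft k₀).summable_iff (f := fun k : ℤ => (a * k / 2) ^ 2 * gk a k ξ)
    exact this.mpr SL
  have SR : Summable fun j : ℤ =>
      (8 * Real.exp (4 * π ^ 2) * (a * kt / 2) ^ 2 * gk a k₀ ξ) * Real.exp (-|(j : ℝ)|) :=
    summable_exp_neg_abs.mul_left _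
  have hre : Fg2 a ξ = ∑' j : ℤ, (a * ((k₀ + j : ℤ) : ℝ) / 2) ^ 2 * gk a (k₀ + j) ξ := by
    rw [Fg2]
    exact ((Equiv.addLeft k₀).tsum_eq (fun k : ℤ => (a * k / 2) ^ 2 * gk a k ξ)).symm
  have hgk0 : gk a k₀ ξ ≤ Fg a ξ :=
    Summable.le_tsum (summable_gk a ha ξ) k₀ (fun j _ => (gk_pos a j ξ).le)
  calc Fg2 a ξ = ∑' j : ℤ, (a * ((k₀ + j : ℤ) : ℝ) / 2) ^ 2 * gk a (k₀ + j) ξ := hre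
    _ ≤ ∑' j : ℤ, (8 * Real.exp (4 * π ^ 2) * (a * kt / 2) ^ 2 * gk a k₀ ξ) *
          Real.exp (-|(j : ℝ)|) := Summable.tsum_le_tsum key SLj SR
    _ = (8 * Real.exp (4 * π ^ 2) * (a * kt / 2) ^ 2 * gk a k₀ ξ) * cT := by
        rw [tsum_mul_left, cT]
    _ ≤ (8 * Real.exp (4 * π ^ 2) * cT) * (a * kt / 2) ^ 2 * Fg a ξ := by
        have hcT : 1 ≤ cT := by
          have h := Summable.le_tsum summable_exp_neg_abs 0 (fun j _ => (Real.exp_pos _).le)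
          simpa [cT] using h
        have h8 : (0 : ℝ) < 8 * Real.exp (4 * π ^ 2) * (a * kt / 2) ^ 2 := by positivity
        nlinarith [mul_le_mul_of_nonneg_left hgk0 (le_of_lt (mul_pos h8 (lt_of_lt_of_le one_pos hcT))), gk_pos a k₀ ξ]

end GaussianMultiplierAux

set_option maxHeartbeats 1000000 in
theorem gaussian_multiplier_second_deriv_bound :
    ∃ C : ℝ, 0 < C ∧ ∀ h : ℝ, 0 < h → h ≤ 1 →
      ∀ m : ℝ → ℝ,
        (∀ ξ : ℝ, m ξ = Real.exp (-ξ ^ 2 / 4) /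
            ∑' k : ℤ, Real.exp (-(ξ - 2 * Real.pi * (k : ℝ) / h) ^ 2 / 4)) →
        ∀ ktilde : ℕ, 1 ≤ ktilde →
          ∀ ξ ∈ Set.Icc (2 * Real.pi * ((ktilde : ℝ) - 1) / h) (2 * Real.pi * (ktilde : ℝ) / h),
            |deriv (deriv m) ξ| ≤ C * ((ktilde : ℝ) / h) ^ 2 * m ξ := by
  have hπ := Real.pi_gt_three
  set C2 : ℝ := 8 * Real.exp (4 * π ^ 2) * cT with hC2def
  have hC2pos : 0 < C2 := by
    have := cT_pos
    positivity
  clear_value C2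
  have hCpos : 0 < π ^ 2 * (C2 + (C2 + 1) ^ 2 / 2) := by
    apply mul_pos (pow_pos Real.pi_pos 2)
    nlinarith [sq_nonneg (C2 + 1)]
  refine ⟨π ^ 2 * (C2 + (C2 + 1) ^ 2 / 2), hCpos, ?_⟩
  intro h hpos hle m hm ktilde hkt ξ hξ
  set a : ℝ := 2 * π / h with hadef
  clear_value a
  have hapos : 0 < a := by rw [hadef]; positivity
  have ha : 2 * π ≤ a := by
    rw [hadef]
    rw [le_div_iff₀ hpos]
    nlinarith
  have hkt1 : (1 : ℝ) ≤ (ktilde : ℝ) := by exact_mod_cast hkt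
  -- m = (Fg a)⁻¹
  have hmF : m = fun x => (Fg a x)⁻¹ := by
    funext x
    rw [hm x]
    have hsum : (∑' k : ℤ, Real.exp (-(x - 2 * π * (k : ℝ) / h) ^ 2 / 4)) =
        Real.exp (-x ^ 2 / 4) * Fg a x := by
      rw [Fg, ← tsum_mul_left]
      apply tsum_congr
      intro k
      rw [gk, ← Real.exp_add]
      congr 1
      rw [hadef]
      field_simp
      ring
    rw [hsum, div_mul_eq_div_div, div_self (Real.exp_ne_zero _), one_div]
  have hPpos : ∀ x, 0 < Fg a x := Fg_pos a ha
  -- derivative computations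
  have hder1 : ∀ x, HasDerivAt m (-(Fg1 a x) / (Fg a x) ^ 2) x := by
    intro x
    rw [hmF]
    exact (hasDerivAt_Fg a ha x).inv (hPpos x).ne'
  have hdm : deriv m = fun x => -(Fg1 a x) / (Fg a x) ^ 2 :=
    funext fun x => (hder1 x).deriv
  set P : ℝ := Fg a ξ with hPdef
  set Q : ℝ := Fg1 a ξ with hQdef
  set S : ℝ := Fg2 a ξ with hSdef
  clear_value P Q S
  have hP : 0 < P := by rw [hPdef]; exact hPpos ξ
  have hder2 : HasDerivAt (fun x => -(Fg1 a x) / (Fg a x) ^ 2)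
      ((2 * Q ^ 2 - S * P) / P ^ 3) ξ := by
    have h1 := ((hasDerivAt_Fg1 a ha ξ).neg).div
      (HasDerivAt.fun_pow (hasDerivAt_Fg a ha ξ) 2) (pow_ne_zero 2 (hPpos ξ).ne')
    have h1' : HasDerivAt (fun x => -(Fg1 a x) / (Fg a x) ^ 2) _ ξ := h1
    simp only [Pi.neg_apply] at h1'
    convert h1' using 1
    rw [← hPdef, ← hQdef, ← hSdef]
    field_simp
    ring
  have hd2 : deriv (deriv m) ξ = (2 * Q ^ 2 - S * P) / P ^ 3 := by
    rw [hdm]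
    exact hder2.deriv
  -- interval translation
  have hl : a * ((ktilde : ℝ) - 1) ≤ ξ := by
    have := hξ.1
    have he : a * ((ktilde : ℝ) - 1) = 2 * π * ((ktilde : ℝ) - 1) / h := by
      rw [hadef]; ring
    linarith [he ▸ this]
  have hr : ξ ≤ a * (ktilde : ℝ) := by
    have := hξ.2
    have he : a * (ktilde : ℝ) = 2 * π * (ktilde : ℝ) / h := by
      rw [hadef]; ring
    linarith [he ▸ this]
  set B : ℝ := a * (ktilde : ℝ) / 2 with hBdef
  clear_value B
  have hB : 0 < B := by
    rw [hBdef]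
    nlinarith
  have hS : S ≤ C2 * B ^ 2 * P := by
    have := moment2 a ha ktilde hkt ξ hl hr
    rw [← hPdef, ← hSdef, ← hBdef] at this
    rw [hC2def]
    exact this
  have hSnn : 0 ≤ S := by rw [hSdef]; exact Fg2_nonneg a ξ
  -- first moment bound
  have hQb : |Q| ≤ (S + B ^ 2 * P) / (2 * B) := by
    have habs : |Q| ≤ ∑' k : ℤ, |a * k / 2| * gk a k ξ := by
      have hsum1 : Summable fun k : ℤ => ‖(a * k / 2) * gk a k ξ‖ :=
        (summable_gk_one a ha ξ).congr fun k => by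
          rw [Real.norm_eq_abs, abs_mul, abs_of_pos (gk_pos _ _ _)]
      have h1 := norm_tsum_le_tsum_norm hsum1
      rw [Real.norm_eq_abs] at h1
      calc |Q| = |∑' k : ℤ, (a * k / 2) * gk a k ξ| := by rw [hQdef, Fg1]
        _ ≤ ∑' k : ℤ, ‖(a * k / 2) * gk a k ξ‖ := h1
        _ = ∑' k : ℤ, |a * k / 2| * gk a k ξ := by
            apply tsum_congr
            intro k
            rw [Real.norm_eq_abs, abs_mul, abs_of_pos (gk_pos _ _ _)]
    have hstep : (∑' k : ℤ, |a * k / 2| * gk a k ξ) ≤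
        ∑' k : ℤ, (1 / (2 * B)) * ((a * k / 2) ^ 2 * gk a k ξ + B ^ 2 * gk a k ξ) := by
      apply Summable.tsum_le_tsum _ (summable_gk_one a ha ξ)
      · apply Summable.mul_left
        exact (summable_gk_sq a ha ξ).add ((summable_gk a ha ξ).mul_left (B ^ 2))
      · intro k
        have h2B : (0 : ℝ) < 2 * B := by linarith
        have hc : |a * k / 2| ≤ (1 / (2 * B)) * ((a * k / 2) ^ 2 + B ^ 2) := by
          have hkey : 2 * B * |a * k / 2| ≤ (a * k / 2) ^ 2 + B ^ 2 := by
            nlinarith [sq_nonneg (|a * (k : ℝ) / 2| - B), sq_abs (a * (k : ℝ) / 2),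
              abs_nonneg (a * (k : ℝ) / 2)]
          calc |a * k / 2| = (2 * B * |a * k / 2|) / (2 * B) := by field_simp
            _ ≤ ((a * k / 2) ^ 2 + B ^ 2) / (2 * B) := by
                apply div_le_div_of_nonneg_right hkey h2B.le
            _ = (1 / (2 * B)) * ((a * k / 2) ^ 2 + B ^ 2) := by ring
        calc |a * k / 2| * gk a k ξ
            ≤ ((1 / (2 * B)) * ((a * k / 2) ^ 2 + B ^ 2)) * gk a k ξ :=
              mul_le_mul_of_nonneg_right hc (gk_pos a k ξ).le
          _ = (1 / (2 * B)) * ((a * k / 2) ^ 2 * gk a k ξ + B ^ 2 * gk a k ξ) := by ring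
    have heval : (∑' k : ℤ, (1 / (2 * B)) * ((a * k / 2) ^ 2 * gk a k ξ + B ^ 2 * gk a k ξ)) =
        (S + B ^ 2 * P) / (2 * B) := by
      rw [tsum_mul_left, Summable.tsum_add (summable_gk_sq a ha ξ) ((summable_gk a ha ξ).mul_left (B ^ 2)),
        tsum_mul_left]
      rw [hSdef, hPdef, Fg2, Fg]
      ring
    linarith only [habs, hstep, heval]
  -- final arithmetic
  have hQle : |Q| ≤ (C2 + 1) * B * P / 2 := by
    have h2B : (0 : ℝ) < 2 * B := by linarith
    have h1 : (S + B ^ 2 * P) / (2 * B) ≤ ((C2 + 1) * B ^ 2 * P) / (2 * B) := by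
      apply div_le_div_of_nonneg_right _ h2B.le
      nlinarith only [hS, hB, hP, sq_nonneg B]
    have h2 : ((C2 + 1) * B ^ 2 * P) / (2 * B) = (C2 + 1) * B * P / 2 := by
      field_simp
    linarith only [hQb, h1, h2]
  have hQ2 : Q ^ 2 ≤ ((C2 + 1) * B * P / 2) ^ 2 := by
    have h0 : 0 ≤ |Q| := abs_nonneg Q
    have := mul_self_le_mul_self h0 hQle
    nlinarith only [this, sq_abs Q]
  have hnum : |2 * Q ^ 2 - S * P| ≤ (C2 + (C2 + 1) ^ 2 / 2) * B ^ 2 * P ^ 2 := by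
    have h1 : 0 ≤ 2 * Q ^ 2 := by positivity
    have h2 : 0 ≤ S * P := mul_nonneg hSnn hP.le
    have h3 : 2 * Q ^ 2 ≤ (C2 + 1) ^ 2 / 2 * B ^ 2 * P ^ 2 := by
      nlinarith only [hQ2, hB, hP, hC2pos]
    have h4 : S * P ≤ C2 * B ^ 2 * P ^ 2 := by
      nlinarith only [hS, hP, hSnn]
    rw [abs_le]
    constructor <;> nlinarith only [h1, h2, h3, h4, hC2pos, hB, hP, sq_nonneg B, sq_nonneg P]
  have hC2B : π ^ 2 * (C2 + (C2 + 1) ^ 2 / 2) * ((ktilde : ℝ) / h) ^ 2 =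
      (C2 + (C2 + 1) ^ 2 / 2) * B ^ 2 := by
    rw [hBdef, hadef]
    field_simp
  rw [hd2, hmF]
  show |(2 * Q ^ 2 - S * P) / P ^ 3| ≤ π ^ 2 * (C2 + (C2 + 1) ^ 2 / 2) *
    ((ktilde : ℝ) / h) ^ 2 * (Fg a ξ)⁻¹
  rw [← hPdef, abs_div, abs_of_pos (pow_pos hP 3), hC2B]
  rw [div_le_iff₀ (pow_pos hP 3)]
  calc |2 * Q ^ 2 - S * P| ≤ (C2 + (C2 + 1) ^ 2 / 2) * B ^ 2 * P ^ 2 := hnum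
    _ = (C2 + (C2 + 1) ^ 2 / 2) * B ^ 2 * P⁻¹ * P ^ 3 := by
        field_simp
end

section
/- Let 0 < h ≤ 1 and m_h(ξ) = exp(-ξ²/4)/∑_{k∈ℤ} exp(-(ξ-2πk/h)²/4). There is a constant C > 0, independent of h, such that ∫_ℝ |m_h''(ξ)| dξ ≤ C h^{-3}. -/
open Real MeasureTheory

noncomputable def tg (β : ℝ) (k : ℤ) (ξ : ℝ) : ℝ := Real.exp (β * k * ξ - (β * k)^2)

noncomputable def Tp (β : ℝ) (p : ℕ) (ξ : ℝ) : ℝ := ∑' k : ℤ, (β * k)^p * tg β k ξ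

lemma tg_pos (β : ℝ) (k : ℤ) (ξ : ℝ) : 0 < tg β k ξ := Real.exp_pos _

lemma summable_absk (p : ℕ) {r : ℝ} (h0 : 0 ≤ r) (h1 : r < 1) :
    Summable (fun k : ℤ => ((k.natAbs : ℝ))^p * r^(k.natAbs)) := by
  have hn : Summable (fun n : ℕ => ((n : ℝ))^p * r^n) := by
    simpa using summable_pow_mul_geometric_of_norm_lt_one p
      (r := r) (by rwa [Real.norm_eq_abs, abs_of_nonneg h0])
  apply Summable.of_nat_of_neg <;> simpa using hn

lemma intabs_le_sq (k : ℤ) : |(k : ℝ)| ≤ (k : ℝ)^2 := by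
  rcases eq_or_ne k 0 with rfl | hk
  · simp
  · have h1 : (1 : ℝ) ≤ |(k : ℝ)| := by
      have := Int.one_le_abs hk
      calc (1:ℝ) ≤ ((|k| : ℤ) : ℝ) := by exact_mod_cast this
        _ = |(k:ℝ)| := by push_cast; ring
    nlinarith [abs_nonneg (k:ℝ), sq_abs (k:ℝ)]

lemma summable_master {β : ℝ} (hβ : 1 ≤ β) (p : ℕ) (R : ℝ) :
    Summable (fun k : ℤ => (β * |(k : ℝ)|)^p *
      Real.exp (β * |(k:ℝ)| * R - (β*(k:ℝ))^2)) := by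
  have hkey : Summable (fun k : ℤ =>
      (β^p * Real.exp ((β*R)^2/2)) * (((k.natAbs:ℝ))^p * (Real.exp (-(1/2)))^(k.natAbs))) :=
    (summable_absk p (le_of_lt (Real.exp_pos _))
      (Real.exp_lt_one_iff.2 (by norm_num))).mul_left _
  refine hkey.of_nonneg_of_le (fun k => by positivity) (fun k => ?_it)
  have habs : |(k:ℝ)| = ((k.natAbs : ℕ) : ℝ) := by
    rw [← Int.cast_abs, Nat.cast_natAbs]
  have hexp : β * |(k:ℝ)| * R - (β*(k:ℝ))^2 ≤ (β*R)^2/2 + (k.natAbs : ℝ) * (-(1/2)) := by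
    have h1 : β * |(k:ℝ)| * R ≤ ((β*R)^2 + (k:ℝ)^2)/2 := by
      nlinarith [sq_nonneg (β * R - |(k:ℝ)|), sq_abs (k:ℝ), abs_nonneg (k:ℝ)]
    have h2 : (k:ℝ)^2 ≤ (β*(k:ℝ))^2 := by
      nlinarith [mul_nonneg (sub_nonneg.2 hβ) (sq_nonneg (k:ℝ)), sq_nonneg (k:ℝ)]
    have h3 : |(k:ℝ)| ≤ (k:ℝ)^2 := intabs_le_sq k
    rw [← habs]; nlinarith
  calc (β * |(k : ℝ)|)^p * Real.exp (β * |(k:ℝ)| * R - (β*(k:ℝ))^2)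
      ≤ (β * |(k : ℝ)|)^p * Real.exp ((β*R)^2/2 + (k.natAbs : ℝ) * (-(1/2))) := by
        apply mul_le_mul_of_nonneg_left (Real.exp_le_exp.2 hexp) (by positivity)
    _ = (β^p * Real.exp ((β*R)^2/2)) * (((k.natAbs:ℝ))^p * (Real.exp (-(1/2)))^(k.natAbs)) := by
        rw [Real.exp_add, ← Real.exp_nat_mul, habs, mul_pow]; ring

lemma term_abs_le {β : ℝ} (hβ : 0 ≤ β) (p : ℕ) (k : ℤ) {ξ R : ℝ} (h : |ξ| ≤ R) :
    |(β * (k:ℝ))^p * tg β k ξ| ≤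
      (β * |(k:ℝ)|)^p * Real.exp (β * |(k:ℝ)| * R - (β*(k:ℝ))^2) := by
  rw [tg, abs_mul, abs_pow, abs_mul, abs_of_nonneg hβ, Real.abs_exp]
  apply mul_le_mul_of_nonneg_left _ (by positivity)
  apply Real.exp_le_exp.2
  have : β * (k:ℝ) * ξ ≤ β * |(k:ℝ)| * R := by
    calc β * (k:ℝ) * ξ ≤ |β * (k:ℝ) * ξ| := le_abs_self _
      _ = β * |(k:ℝ)| * |ξ| := by rw [abs_mul, abs_mul, abs_of_nonneg hβ]
      _ ≤ β * |(k:ℝ)| * R := by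
          apply mul_le_mul_of_nonneg_left h (by positivity)
  linarith

lemma summable_term {β : ℝ} (hβ : 1 ≤ β) (p : ℕ) (ξ : ℝ) :
    Summable (fun k : ℤ => (β * (k:ℝ))^p * tg β k ξ) := by
  apply Summable.of_abs
  exact (summable_master hβ p |ξ|).of_nonneg_of_le (fun k => abs_nonneg _)
    (fun k => term_abs_le (by linarith) p k le_rfl)

lemma hasDerivAt_Tp {β : ℝ} (hβ : 1 ≤ β) (p : ℕ) (ξ : ℝ) :
    HasDerivAt (Tp β p) (Tp β (p+1) ξ) ξ := by
  set R := |ξ| + 1 with hR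
  have hmem : ξ ∈ Set.Ioo (-R) R := by
    constructor <;> [skip; skip] <;> cases' abs_lt.1 (show |ξ| < R by rw [hR]; linarith) with h1 h2 <;> linarith
  have key := hasDerivAt_tsum_of_isPreconnected
    (u := fun k : ℤ => (β * |(k:ℝ)|)^(p+1) * Real.exp (β * |(k:ℝ)| * R - (β*(k:ℝ))^2))
    (g := fun (k : ℤ) (x : ℝ) => (β * (k:ℝ))^p * tg β k x)
    (g' := fun (k : ℤ) (x : ℝ) => (β * (k:ℝ))^(p+1) * tg β k x)
    (summable_master hβ (p+1) R) isOpen_Ioo (isPreconnected_Ioo)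
    (fun k y _ => ?_) (fun k y hy => ?_) hmem (summable_term hβ p ξ) hmem
  · exact key
  · -- HasDerivAt of single term
    have h1 : HasDerivAt (fun x : ℝ => β * (k:ℝ) * x - (β*(k:ℝ))^2) (β * (k:ℝ)) y := by
      simpa using ((hasDerivAt_id y).const_mul (β * (k:ℝ))).sub_const ((β*(k:ℝ))^2)
    have h2 := (h1.exp).const_mul ((β * (k:ℝ))^p)
    convert h2 using 1
    show (β * (k:ℝ))^(p+1) * tg β k y = _
    rw [tg, pow_succ]; ring
    all_goals rfl
  · exact term_abs_le (by linarith) (p+1) k (le_of_lt (abs_lt.2 ⟨hy.1, hy.2⟩))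

lemma tg_le_T0 {β : ℝ} (hβ : 1 ≤ β) (ξ : ℝ) (k0 : ℤ) : tg β k0 ξ ≤ Tp β 0 ξ := by
  have h := Summable.le_tsum (summable_term hβ 0 ξ) k0
    (fun j _ => by have := tg_pos β j ξ; positivity)
  simpa [Tp] using h

lemma one_le_T0 {β : ℝ} (hβ : 1 ≤ β) (ξ : ℝ) : 1 ≤ Tp β 0 ξ := by
  have := tg_le_T0 hβ ξ 0
  simpa [tg] using this

lemma T0_pos {β : ℝ} (hβ : 1 ≤ β) (ξ : ℝ) : 0 < Tp β 0 ξ := lt_of_lt_of_le one_pos (one_le_T0 hβ ξ)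

lemma T2_pos {β : ℝ} (hβ : 1 ≤ β) (ξ : ℝ) : 0 < Tp β 2 ξ := by
  have h := Summable.le_tsum (summable_term hβ 2 ξ) 1
    (fun j _ => by have := tg_pos β j ξ; positivity)
  have : (0:ℝ) < (β * ((1:ℤ):ℝ))^2 * tg β 1 ξ := by
    have := tg_pos β 1 ξ
    have hb0 : (0:ℝ) < β := by linarith
    push_cast
    positivity
  exact lt_of_lt_of_le this (le_trans h (le_of_eq rfl))

lemma T2_nonneg {β : ℝ} (hβ : 1 ≤ β) (ξ : ℝ) : 0 ≤ Tp β 2 ξ := (T2_pos hβ ξ).le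

lemma T1_sq_le {β : ℝ} (hβ : 1 ≤ β) (ξ : ℝ) :
    (Tp β 1 ξ)^2 ≤ Tp β 0 ξ * Tp β 2 ξ := by
  set A := Tp β 0 ξ with hA
  set B := Tp β 2 ξ with hB
  have hApos : 0 < A := T0_pos hβ ξ
  have habs : Summable (fun k : ℤ => |(β * (k:ℝ))^1 * tg β k ξ|) :=
    (summable_term hβ 1 ξ).abs
  set L := ∑' k : ℤ, |(β * (k:ℝ))^1 * tg β k ξ| with hL
  have hLnn : 0 ≤ L := tsum_nonneg (fun k => abs_nonneg _)
  have hT1L : |Tp β 1 ξ| ≤ L := by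
    have h := norm_tsum_le_tsum_norm (f := fun k : ℤ => (β * (k:ℝ))^1 * tg β k ξ)
      (by simp only [Real.norm_eq_abs]; exact habs)
    simp only [Real.norm_eq_abs] at h
    exact h
  have hlam : ∀ lam : ℝ, 2 * lam * L ≤ B + lam^2 * A := by
    intro lam
    have hterm : ∀ k : ℤ, 2 * lam * |(β * (k:ℝ))^1 * tg β k ξ| ≤
        (β * (k:ℝ))^2 * tg β k ξ + lam^2 * ((β * (k:ℝ))^0 * tg β k ξ) := by
      intro k
      have ht := tg_pos β k ξ
      have habs1 : |(β * (k:ℝ))^1 * tg β k ξ| = |β * (k:ℝ)| * tg β k ξ := by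
        rw [pow_one, abs_mul, abs_of_pos ht]
      rw [habs1, pow_zero, one_mul]
      nlinarith [sq_nonneg (|β*(k:ℝ)| - lam), sq_abs (β*(k:ℝ)), ht, abs_nonneg (β*(k:ℝ))]
    calc 2 * lam * L = ∑' k : ℤ, 2 * lam * |(β * (k:ℝ))^1 * tg β k ξ| := tsum_mul_left.symm
      _ ≤ ∑' k : ℤ, ((β * (k:ℝ))^2 * tg β k ξ + lam^2 * ((β * (k:ℝ))^0 * tg β k ξ)) := by
          exact Summable.tsum_le_tsum hterm (habs.mul_left _)
            ((summable_term hβ 2 ξ).add ((summable_term hβ 0 ξ).mul_left _))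
      _ = B + lam^2 * A := by
          rw [Summable.tsum_add (summable_term hβ 2 ξ) ((summable_term hβ 0 ξ).mul_left _), tsum_mul_left]
          rfl
  -- conclude
  have hkey := hlam (L / A)
  have hL2 : L^2 ≤ A * B := by
    have hAne : A ≠ 0 := ne_of_gt hApos
    have e1 : 2 * (L/A) * L = 2*(L^2/A) := by field_simp
    have e2 : (L/A)^2 * A = L^2/A := by field_simp
    have h3 : L^2/A ≤ B := by rw [e1, e2] at hkey; linarith
    calc L^2 = (L^2/A)*A := by field_simp
      _ ≤ B*A := mul_le_mul_of_nonneg_right h3 hApos.le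
      _ = A*B := mul_comm _ _
  calc (Tp β 1 ξ)^2 = |Tp β 1 ξ|^2 := (sq_abs _).symm
    _ ≤ L^2 := by nlinarith [abs_nonneg (Tp β 1 ξ)]
    _ ≤ A * B := hL2

lemma weight_bound_nat (n : ℕ) :
    (1 + (n:ℝ)^2) * Real.exp (π^2 * ((n:ℝ) - (n:ℝ)^2)) ≤ 4 * (2⁻¹:ℝ)^n := by
  have hpi : (9:ℝ) ≤ π^2 := by nlinarith [Real.pi_gt_three]
  match n with
  | 0 => norm_num
  | 1 => norm_num
  | (n+2) => ?_
  set N : ℕ := n + 2 with hN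
  have hN2 : (2:ℝ) ≤ (N:ℝ) := by rw [hN]; push_cast; linarith [Nat.cast_nonneg (α := ℝ) n]
  have hNnn : (0:ℝ) ≤ (N:ℝ) := by linarith
  -- exponent bound: π^2 * (N - N^2) ≤ -9N
  have hexp : π^2 * ((N:ℝ) - (N:ℝ)^2) ≤ (N:ℝ) * (-9) := by
    have h1 : (N:ℝ) - (N:ℝ)^2 ≤ -(N:ℝ) := by nlinarith
    have h2 : (N:ℝ) - (N:ℝ)^2 ≤ 0 := by nlinarith
    nlinarith
  have hsq : (1 + (N:ℝ)^2) ≤ 2 * (4:ℝ)^N := by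
    have h1 : (N:ℝ) < (2:ℝ)^N := by
      exact_mod_cast Nat.lt_two_pow_self (n := N)
    have h2 : (N:ℝ)^2 ≤ (4:ℝ)^N := by
      have : ((2:ℝ)^N)^2 = (4:ℝ)^N := by
        rw [← pow_mul, show (4:ℝ) = 2^2 by norm_num, ← pow_mul]; ring_nf
      nlinarith
    have h3 : (1:ℝ) ≤ (4:ℝ)^N := one_le_pow₀ (by norm_num)
    linarith
  have hmono : Real.exp (π^2 * ((N:ℝ) - (N:ℝ)^2)) ≤ (Real.exp (-9))^N := by
    rw [← Real.exp_nat_mul]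
    exact Real.exp_le_exp.2 hexp
  have hge : (8 * Real.exp (-9) : ℝ) ≤ 1 := by
    have h9 : (8:ℝ) ≤ Real.exp 9 := by linarith [Real.add_one_le_exp (9:ℝ)]
    have hpos := Real.exp_pos (9:ℝ)
    rw [Real.exp_neg]
    calc 8 * (Real.exp 9)⁻¹ ≤ Real.exp 9 * (Real.exp 9)⁻¹ := by gcongr
      _ = 1 := mul_inv_cancel₀ (ne_of_gt hpos)
  calc (1 + (N:ℝ)^2) * Real.exp (π^2 * ((N:ℝ) - (N:ℝ)^2))
      ≤ (2 * (4:ℝ)^N) * (Real.exp (-9))^N := by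
        apply mul_le_mul hsq hmono (le_of_lt (Real.exp_pos _)) (by positivity)
    _ = 2 * ((8 * Real.exp (-9))^N * (2⁻¹:ℝ)^N) := by
        have h48 : (8:ℝ)^N * 2⁻¹^N = 4^N := by rw [← mul_pow]; norm_num
        rw [mul_pow]
        rw [← h48]
        ring
    _ ≤ 2 * (1 * (2⁻¹:ℝ)^N) := by
        have : (8 * Real.exp (-9):ℝ)^N ≤ 1 := pow_le_one₀ (by positivity) hge
        have h2 : (0:ℝ) ≤ (2⁻¹:ℝ)^N := by positivity
        nlinarith
    _ ≤ 4 * (2⁻¹:ℝ)^N := by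
        have h2 : (0:ℝ) ≤ (2⁻¹:ℝ)^N := by positivity
        nlinarith

lemma weight_bound (j : ℤ) :
    (1 + (j:ℝ)^2) * Real.exp (π^2 * (|(j:ℝ)| - (j:ℝ)^2)) ≤ 4 * (2⁻¹:ℝ)^(j.natAbs) := by
  have h1 : |(j:ℝ)| = ((j.natAbs : ℕ) : ℝ) := by rw [← Int.cast_abs, Nat.cast_natAbs]
  have h2 : (j:ℝ)^2 = ((j.natAbs : ℕ):ℝ)^2 := by
    rw [← sq_abs, h1]
  rw [h1, h2]
  exact weight_bound_nat j.natAbs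

-- sum of the weights
lemma summable_w : Summable (fun j : ℤ => (4:ℝ) * (2⁻¹)^(j.natAbs)) := by
  apply Summable.mul_left
  apply Summable.of_nat_of_neg <;>
    simpa using summable_geometric_of_lt_one (by norm_num : (0:ℝ) ≤ 2⁻¹) (by norm_num)

lemma tsum_w_le : (∑' j : ℤ, (4:ℝ) * (2⁻¹)^(j.natAbs)) ≤ 12 := by
  have hg : Summable (fun n : ℕ => ((2⁻¹:ℝ))^n) :=
    summable_geometric_of_lt_one (by norm_num) (by norm_num)
  have h1 : Summable (fun n : ℕ => (4:ℝ) * (2⁻¹)^n) := hg.mul_left _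
  have h2 : Summable (fun n : ℕ => (2:ℝ) * (2⁻¹)^n) := hg.mul_left _
  have heq : ∀ n : ℕ, (4:ℝ) * (2⁻¹)^((-((n:ℤ)+1)).natAbs) = 2 * (2⁻¹)^n := by
    intro n
    have hn : (-((n:ℤ)+1)).natAbs = n + 1 := by
      rw [Int.natAbs_neg, show ((n:ℤ)+1) = ((n+1 : ℕ) : ℤ) by push_cast; ring, Int.natAbs_natCast]
    rw [hn, pow_succ]; ring
  have hsplit := tsum_of_nat_of_neg_add_one
    (f := fun j : ℤ => (4:ℝ) * (2⁻¹)^(j.natAbs))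
    (by simpa using h1) (by simpa only [heq] using h2)
  rw [hsplit]
  have e1 : (∑' n : ℕ, (4:ℝ) * (2⁻¹)^(((n:ℤ)).natAbs)) = 4 * (1 - 2⁻¹)⁻¹ := by
    rw [tsum_congr (fun n : ℕ => by simp : ∀ n : ℕ, (4:ℝ) * (2⁻¹)^(((n:ℤ)).natAbs) = 4 * (2⁻¹)^n),
      tsum_mul_left, tsum_geometric_of_lt_one (by norm_num) (by norm_num)]
  have e2 : (∑' n : ℕ, (4:ℝ) * (2⁻¹)^((-((n:ℤ)+1)).natAbs)) = 2 * (1 - 2⁻¹)⁻¹ := by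
    rw [tsum_congr heq, tsum_mul_left, tsum_geometric_of_lt_one (by norm_num) (by norm_num)]
  rw [e1, e2]
  norm_num

lemma tg_shift (β : ℝ) (k k0 : ℤ) (ξ : ℝ) :
    tg β k ξ = tg β k0 ξ *
      Real.exp (β*((k - k0 : ℤ):ℝ)*(ξ - 2*β*k0) - (β*((k - k0 : ℤ):ℝ))^2) := by
  rw [tg, tg, ← Real.exp_add]
  congr 1
  push_cast
  ring

lemma tg_eval (β : ℝ) (k0 : ℤ) (ξ : ℝ) :
    tg β k0 ξ = Real.exp ((ξ^2 - (ξ - 2*β*k0)^2)/4) := by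
  rw [tg]; congr 1; ring

lemma T2_le {β : ℝ} (hβ : π ≤ β) {ξ : ℝ} {k0 : ℤ} (hd : |ξ - 2*β*(k0:ℝ)| ≤ β) :
    Tp β 2 ξ ≤ 24*β^2*(1 + (k0:ℝ)^2) * tg β k0 ξ := by
  have hβ1 : (1:ℝ) ≤ β := by nlinarith [Real.pi_gt_three]
  have hβ0 : (0:ℝ) < β := by linarith
  set t0 := tg β k0 ξ with ht0def
  have ht0 : 0 < t0 := tg_pos β k0 ξ
  set c : ℝ := 2*β^2*(1 + (k0:ℝ)^2)*t0 with hc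
  have hcnn : 0 ≤ c := by positivity
  have hterm : ∀ k : ℤ, (β * (k:ℝ))^2 * tg β k ξ ≤ c * ((4:ℝ) * (2⁻¹)^((k - k0).natAbs)) := by
    intro k
    set j : ℤ := k - k0 with hj
    set d : ℝ := ξ - 2*β*(k0:ℝ) with hdd
    have hshift : tg β k ξ = t0 * Real.exp (β*((j:ℤ):ℝ)*d - (β*((j:ℤ):ℝ))^2) :=
      tg_shift β k k0 ξ
    have hexp : β*((j:ℤ):ℝ)*d - (β*((j:ℤ):ℝ))^2 ≤ π^2 * (|((j:ℤ):ℝ)| - ((j:ℤ):ℝ)^2) := by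
      have h1 : β*((j:ℤ):ℝ)*d ≤ β^2 * |((j:ℤ):ℝ)| := by
        calc β*((j:ℤ):ℝ)*d ≤ |β*((j:ℤ):ℝ)*d| := le_abs_self _
          _ = β * |((j:ℤ):ℝ)| * |d| := by
              rw [abs_mul, abs_mul, abs_of_pos hβ0]
          _ ≤ β * |((j:ℤ):ℝ)| * β := by
              exact mul_le_mul_of_nonneg_left hd (by positivity)
          _ = β^2 * |((j:ℤ):ℝ)| := by ring
      have h2 : |((j:ℤ):ℝ)| - ((j:ℤ):ℝ)^2 ≤ 0 := by
        linarith [intabs_le_sq j]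
      have h3 : π^2 ≤ β^2 := by nlinarith [Real.pi_pos]
      have h4 : β^2 * (|((j:ℤ):ℝ)| - ((j:ℤ):ℝ)^2) ≤ π^2 * (|((j:ℤ):ℝ)| - ((j:ℤ):ℝ)^2) := by
        nlinarith
      nlinarith [sq_nonneg (β*((j:ℤ):ℝ))]
    have hk2 : (β * (k:ℝ))^2 ≤ β^2 * (2*(1 + (k0:ℝ)^2)*(1 + ((j:ℤ):ℝ)^2)) := by
      have hkj : (k:ℝ) = ((j:ℤ):ℝ) + (k0:ℝ) := by rw [hj]; push_cast; ring
      rw [hkj]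
      nlinarith [sq_nonneg (((j:ℤ):ℝ) - (k0:ℝ)), sq_nonneg (((j:ℤ):ℝ) * (k0:ℝ) - 1),
        sq_nonneg (((j:ℤ):ℝ) * (k0:ℝ) + 1), sq_nonneg β, sq_nonneg (((j:ℤ):ℝ) + (k0:ℝ))]
    calc (β * (k:ℝ))^2 * tg β k ξ
        = (β * (k:ℝ))^2 * t0 * Real.exp (β*((j:ℤ):ℝ)*d - (β*((j:ℤ):ℝ))^2) := by
          rw [hshift]; ring
      _ ≤ (β^2 * (2*(1 + (k0:ℝ)^2)*(1 + ((j:ℤ):ℝ)^2))) * t0 *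
            Real.exp (π^2 * (|((j:ℤ):ℝ)| - ((j:ℤ):ℝ)^2)) := by
          apply mul_le_mul (mul_le_mul_of_nonneg_right hk2 ht0.le)
            (Real.exp_le_exp.2 hexp) (le_of_lt (Real.exp_pos _)) (by positivity)
      _ = c * ((1 + ((j:ℤ):ℝ)^2) * Real.exp (π^2 * (|((j:ℤ):ℝ)| - ((j:ℤ):ℝ)^2))) := by
          rw [hc]; ring
      _ ≤ c * ((4:ℝ) * (2⁻¹)^(j.natAbs)) := by
          exact mul_le_mul_of_nonneg_left (weight_bound j) hcnn
  have hsub : Summable (fun k : ℤ => c * ((4:ℝ) * (2⁻¹)^((k - k0).natAbs))) := by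
    apply Summable.mul_left
    exact ((Equiv.subRight k0).summable_iff (f := fun j : ℤ => (4:ℝ) * (2⁻¹)^(j.natAbs))).2
      summable_w
  have hle : Tp β 2 ξ ≤ ∑' k : ℤ, c * ((4:ℝ) * (2⁻¹)^((k - k0).natAbs)) :=
    Summable.tsum_le_tsum hterm (summable_term hβ1 2 ξ) hsub
  have heval : (∑' k : ℤ, c * ((4:ℝ) * (2⁻¹)^((k - k0).natAbs)))
      = c * ∑' j : ℤ, (4:ℝ) * (2⁻¹)^(j.natAbs) := by
    rw [tsum_mul_left]
    congr 1
    exact (Equiv.subRight k0).tsum_eq (fun j : ℤ => (4:ℝ) * (2⁻¹)^(j.natAbs))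
  calc Tp β 2 ξ ≤ c * ∑' j : ℤ, (4:ℝ) * (2⁻¹)^(j.natAbs) := by rw [← heval]; exact hle
    _ ≤ c * 12 := mul_le_mul_of_nonneg_left tsum_w_le hcnn
    _ = 24*β^2*(1 + (k0:ℝ)^2) * t0 := by rw [hc]; ring

set_option maxHeartbeats 4000000 in
theorem gaussian_multiplier_second_deriv_L1 :
    ∃ C : ℝ, 0 < C ∧ ∀ h : ℝ, 0 < h → h ≤ 1 →
      ∀ m : ℝ → ℝ,
        (∀ ξ : ℝ, m ξ = Real.exp (-ξ ^ 2 / 4) /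
            ∑' k : ℤ, Real.exp (-(ξ - 2 * Real.pi * (k : ℝ) / h) ^ 2 / 4)) →
        (∫ ξ : ℝ, |deriv (deriv m) ξ|) ≤ C * h⁻¹ ^ 3 := by
  refine ⟨4800 * π^3, by positivity, ?_⟩
  intro h hh hh1 m hm
  have hne : h ≠ 0 := ne_of_gt hh
  set β : ℝ := π / h with hβdef
  have hπ3 : (3:ℝ) < π := Real.pi_gt_three
  have hβπ : π ≤ β := by
    rw [hβdef, le_div_iff₀ hh]
    nlinarith [Real.pi_pos]
  have hβ3 : (3:ℝ) ≤ β := by linarith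
  have hβ1 : (1:ℝ) ≤ β := by linarith
  have hβ0 : (0:ℝ) < β := by linarith
  -- m is the reciprocal of the theta-type series
  have hmeq : m = fun ξ => (Tp β 0 ξ)⁻¹ := by
    funext ξ
    rw [hm ξ]
    have hterm : ∀ k : ℤ, Real.exp (-(ξ - 2 * π * (k : ℝ) / h) ^ 2 / 4)
        = Real.exp (-ξ^2/4) * ((β * (k:ℝ))^0 * tg β k ξ) := by
      intro k
      rw [pow_zero, one_mul, tg, ← Real.exp_add]
      congr 1
      rw [hβdef]
      field_simp
      ring
    rw [tsum_congr hterm, tsum_mul_left]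
    have hT : (∑' k : ℤ, (β * (k:ℝ))^0 * tg β k ξ) = Tp β 0 ξ := rfl
    rw [hT, div_eq_mul_inv, mul_inv, ← mul_assoc,
      mul_inv_cancel₀ (Real.exp_ne_zero _), one_mul]
  have hT0 : ∀ x : ℝ, HasDerivAt (Tp β 0) (Tp β 1 x) x := hasDerivAt_Tp hβ1 0
  have hT1 : ∀ x : ℝ, HasDerivAt (Tp β 1) (Tp β 2 x) x := hasDerivAt_Tp hβ1 1
  have hT0pos : ∀ x : ℝ, 0 < Tp β 0 x := T0_pos hβ1
  have hT0ne : ∀ x : ℝ, Tp β 0 x ≠ 0 := fun x => ne_of_gt (hT0pos x)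
  have hdm : deriv m = fun x => -(Tp β 1 x) / (Tp β 0 x)^2 := by
    funext x
    rw [hmeq]
    exact ((hT0 x).inv (hT0ne x)).deriv
  have hdd : ∀ x : ℝ, deriv (deriv m) x
      = (2*(Tp β 1 x)^2 - Tp β 2 x * Tp β 0 x) / (Tp β 0 x)^3 := by
    intro x
    rw [hdm]
    have hnum : HasDerivAt (fun y : ℝ => -(Tp β 1 y)) (-(Tp β 2 x)) x := (hT1 x).neg
    have hden : HasDerivAt (fun y : ℝ => (Tp β 0 y)^2) (2 * Tp β 0 x * Tp β 1 x) x := by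
      simpa using (hT0 x).fun_pow 2
    have hdiv := hnum.fun_div hden (pow_ne_zero 2 (hT0ne x))
    rw [hdiv.deriv]
    have h0 := hT0ne x
    field_simp
    ring
  -- dominating functions
  set g1 : ℝ → ℝ := Set.indicator (Set.Icc (-(2*β)) (2*β)) (fun _ => 540*β^2) with hg1def
  set g2 : ℝ → ℝ := fun x => 324*β^2 * Real.exp (-(1/16) * x^2) with hg2def
  have hg2nn : ∀ x : ℝ, 0 ≤ g2 x := fun x => by rw [hg2def]; positivity
  have hg1nn : ∀ x : ℝ, 0 ≤ g1 x := fun x =>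
    Set.indicator_nonneg (fun _ _ => by positivity) x
  -- pointwise bound
  have hpt : ∀ x : ℝ, |deriv (deriv m) x| ≤ g1 x + g2 x := by
    intro x
    set k0 : ℤ := round (x / (2*β)) with hk0
    have hd : |x - 2*β*(k0:ℝ)| ≤ β := by
      have h1 := abs_sub_round (x / (2*β))
      have h2 : x - 2*β*(k0:ℝ) = (2*β) * (x/(2*β) - (k0:ℝ)) := by field_simp
      rw [h2, abs_mul, abs_of_pos (by linarith : (0:ℝ) < 2*β)]
      calc 2*β*|x/(2*β) - (k0:ℝ)| ≤ 2*β*(1/2) :=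
            mul_le_mul_of_nonneg_left h1 (by linarith)
        _ = β := by ring
    have hd2 : (x - 2*β*(k0:ℝ))^2 ≤ β^2 := by
      nlinarith [abs_nonneg (x - 2*β*(k0:ℝ)), sq_abs (x - 2*β*(k0:ℝ))]
    set A := Tp β 0 x with hA
    set B := Tp β 2 x with hB
    set t0 := tg β k0 x with ht0def
    have hA1 : 1 ≤ A := one_le_T0 hβ1 x
    have hApos : 0 < A := by linarith
    have ht0A : t0 ≤ A := tg_le_T0 hβ1 x k0
    have ht0 : 0 < t0 := tg_pos β k0 x
    have hBpos : 0 < B := T2_pos hβ1 x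
    have hBle : B ≤ 24*β^2*(1 + (k0:ℝ)^2) * t0 := T2_le hβπ hd
    have hCS : (Tp β 1 x)^2 ≤ A * B := T1_sq_le hβ1 x
    have hmpp : |deriv (deriv m) x| ≤ 3 * B / A^2 := by
      rw [hdd x]
      rw [abs_div, abs_of_pos (by positivity : (0:ℝ) < A^3)]
      rw [div_le_div_iff₀ (by positivity) (by positivity)]
      have habs : |2*(Tp β 1 x)^2 - B * A| ≤ 3 * (A*B) := by
        rw [abs_le]
        constructor
        · nlinarith [sq_nonneg (Tp β 1 x)]
        · nlinarith [sq_nonneg (Tp β 1 x)]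
      calc |2*(Tp β 1 x)^2 - Tp β 2 x * Tp β 0 x| * A^2
          ≤ (3*(A*B)) * A^2 := mul_le_mul_of_nonneg_right habs (by positivity)
        _ = 3*B*A^3 := by ring
    have ht0eval : t0 = Real.exp ((x^2 - (x - 2*β*(k0:ℝ))^2)/4) := tg_eval β k0 x
    have hA2pos : (0:ℝ) < A^2 := by positivity
    have hA2ge : (1:ℝ) ≤ A^2 := by nlinarith
    have ht0A2 : t0/A^2 ≤ t0 := by
      rw [div_le_iff₀ hA2pos]
      nlinarith [mul_le_mul_of_nonneg_left hA2ge ht0.le]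
    have ht0inv : t0/A^2 ≤ 1/t0 := by
      rw [div_le_div_iff₀ hA2pos ht0]
      nlinarith [mul_le_mul ht0A ht0A ht0.le hApos.le]
    have hmin : t0/A^2 ≤ 1 ∧ t0/A^2 ≤ Real.exp ((β^2 - x^2)/4) := by
      rcases le_or_gt t0 1 with hc | hc
      · have hexple : (x^2 - (x - 2*β*(k0:ℝ))^2)/4 ≤ 0 := by
          rw [ht0eval, Real.exp_le_one_iff] at hc
          exact hc
        have hx2b : x^2 ≤ β^2 := by nlinarith
        refine ⟨le_trans ht0A2 hc, le_trans ht0A2 (le_trans hc ?_)⟩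
        have : (0:ℝ) ≤ (β^2 - x^2)/4 := by linarith
        linarith [Real.add_one_le_exp ((β^2 - x^2)/4)]
      · constructor
        · refine le_trans ht0inv ?_
          rw [div_le_one ht0]; linarith
        · refine le_trans ht0inv ?_
          rw [ht0eval, one_div, ← Real.exp_neg]
          apply Real.exp_le_exp.2
          nlinarith
    have hk0sq2 : 2*β^2*(1 + (k0:ℝ)^2) ≤ 3*β^2 + x^2 := by
      nlinarith [hd2, sq_nonneg (β*(k0:ℝ) - x)]
    have hfin : |deriv (deriv m) x| ≤ (108*β^2 + 36*x^2) * (t0/A^2) := by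
      refine le_trans hmpp ?_
      have hstep : 3*B ≤ (108*β^2 + 36*x^2) * t0 := by
        nlinarith [hBle, mul_le_mul_of_nonneg_right hk0sq2 ht0.le]
      rw [div_le_iff₀ hA2pos, mul_assoc, div_mul_cancel₀ t0 (ne_of_gt hA2pos)]
      exact hstep
    rcases le_or_gt |x| (2*β) with hxc | hxc
    · have hg1x : g1 x = 540*β^2 := by
        rw [hg1def]
        apply Set.indicator_of_mem
        rcases abs_le.1 hxc with ⟨l, r⟩
        exact ⟨by linarith, by linarith⟩
      have hb1 : (108*β^2 + 36*x^2) * (t0/A^2) ≤ 540*β^2 := by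
        have hx2 : x^2 ≤ 4*β^2 := by nlinarith [sq_abs x, abs_nonneg x]
        calc (108*β^2 + 36*x^2) * (t0/A^2) ≤ (108*β^2 + 36*x^2) * 1 :=
              mul_le_mul_of_nonneg_left hmin.1 (by positivity)
          _ ≤ 540*β^2 := by nlinarith
      calc |deriv (deriv m) x| ≤ (108*β^2+36*x^2)*(t0/A^2) := hfin
        _ ≤ 540*β^2 := hb1
        _ = g1 x + 0 := by rw [hg1x]; ring
        _ ≤ g1 x + g2 x := by linarith [hg2nn x]
    · have hx2 : 4*β^2 ≤ x^2 := by nlinarith [sq_abs x, abs_nonneg x, hβ0]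
      set E := Real.exp (-(1/16) * x^2) with hEdef
      have hEpos : 0 < E := Real.exp_pos _
      have hE1 : E ≤ 1 := by
        rw [hEdef, Real.exp_le_one_iff]; nlinarith [sq_nonneg x]
      have hEE : Real.exp ((β^2 - x^2)/4) ≤ E * E := by
        rw [hEdef, ← Real.exp_add]
        apply Real.exp_le_exp.2
        nlinarith
      have hxE : x^2 * E ≤ 16 := by
        have hh1 := Real.add_one_le_exp (x^2/16)
        have hE' : E * Real.exp (x^2/16) = 1 := by
          rw [hEdef, ← Real.exp_add, show -(1/16)*x^2 + x^2/16 = 0 by ring, Real.exp_zero]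
        have h16 : x^2 ≤ 16 * Real.exp (x^2/16) := by linarith
        calc x^2 * E ≤ (16 * Real.exp (x^2/16)) * E := mul_le_mul_of_nonneg_right h16 hEpos.le
          _ = 16 * (E * Real.exp (x^2/16)) := by ring
          _ = 16 := by rw [hE']; ring
      have hb2 : (108*β^2 + 36*x^2) * (t0/A^2) ≤ 324*β^2*E := by
        calc (108*β^2 + 36*x^2) * (t0/A^2)
            ≤ (108*β^2 + 36*x^2) * (E*E) := by
              apply mul_le_mul_of_nonneg_left (le_trans hmin.2 hEE) (by positivity)
          _ = 108*β^2*(E*E) + 36*((x^2*E)*E) := by ring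
          _ ≤ 108*β^2*(1*E) + 36*(16*E) := by
              have c1 : E*E ≤ 1*E := mul_le_mul_of_nonneg_right hE1 hEpos.le
              have c2 : (x^2*E)*E ≤ 16*E := mul_le_mul_of_nonneg_right hxE hEpos.le
              have b0 : (0:ℝ) ≤ 108*β^2 := by positivity
              exact add_le_add (mul_le_mul_of_nonneg_left c1 b0)
                (mul_le_mul_of_nonneg_left c2 (by norm_num))
          _ ≤ 324*β^2*E := by
              have h9 : (9:ℝ) ≤ β^2 := by
                rw [sq]
                calc (9:ℝ) = 3*3 := by norm_num
                  _ ≤ β*β := mul_le_mul hβ3 hβ3 (by norm_num) (by linarith)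
              have c4 : 108*β^2 + 576 ≤ 324*β^2 := by linarith
              calc 108*β^2*(1*E) + 36*(16*E) = (108*β^2 + 576)*E := by ring
                _ ≤ (324*β^2)*E := mul_le_mul_of_nonneg_right c4 hEpos.le
                _ = 324*β^2*E := by ring
      calc |deriv (deriv m) x| ≤ (108*β^2+36*x^2)*(t0/A^2) := hfin
        _ ≤ 324*β^2*E := hb2
        _ = g2 x := by rw [hg2def]
        _ ≤ g1 x + g2 x := by linarith [hg1nn x]
  -- integrability and integral computation
  have hint_g1 : Integrable g1 := by
    rw [hg1def]
    exact (integrable_indicator_iff measurableSet_Icc).2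
      (integrableOn_const measure_Icc_lt_top.ne)
  have hint_g2 : Integrable g2 := by
    rw [hg2def]
    exact (integrable_exp_neg_mul_sq (by norm_num : (0:ℝ) < 1/16)).const_mul _
  have hmono := integral_mono_of_nonneg (μ := volume)
    (f := fun x => |deriv (deriv m) x|) (g := fun x => g1 x + g2 x)
    (Filter.Eventually.of_forall (fun x => abs_nonneg _))
    (hint_g1.add hint_g2)
    (Filter.Eventually.of_forall hpt)
  have hI1 : (∫ x : ℝ, g1 x) = 540*β^2 * (4*β) := by
    rw [hg1def, integral_indicator_const _ measurableSet_Icc, measureReal_def, Real.volume_Icc,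
      ENNReal.toReal_ofReal (by linarith : (0:ℝ) ≤ 2*β - -(2*β)), smul_eq_mul]
    ring
  have hI2 : (∫ x : ℝ, g2 x) = 324*β^2 * Real.sqrt (π/(1/16)) := by
    have e1 : (∫ x : ℝ, g2 x) = ∫ x : ℝ, (324*β^2) • Real.exp (-(1/16) * x^2) := by
      apply integral_congr_ae
      filter_upwards with x
      rw [hg2def, smul_eq_mul]
    rw [e1, integral_smul, smul_eq_mul, integral_gaussian]
  have hsqrt : Real.sqrt (π/(1/16)) ≤ 8 := by
    rw [show π/(1/16) = 16*π by ring]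
    calc Real.sqrt (16*π) ≤ Real.sqrt 64 := Real.sqrt_le_sqrt (by nlinarith [Real.pi_le_four])
      _ = 8 := by
        rw [show (64:ℝ) = 8^2 by norm_num, Real.sqrt_sq (by norm_num : (0:ℝ) ≤ 8)]
  calc (∫ x : ℝ, |deriv (deriv m) x|) ≤ ∫ x : ℝ, (g1 x + g2 x) := hmono
    _ = (∫ x : ℝ, g1 x) + ∫ x : ℝ, g2 x := integral_add hint_g1 hint_g2
    _ ≤ 540*β^2*(4*β) + 324*β^2*8 := by
        rw [hI1, hI2]
        have : 324*β^2 * Real.sqrt (π/(1/16)) ≤ 324*β^2*8 :=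
          mul_le_mul_of_nonneg_left hsqrt (by positivity)
        linarith
    _ ≤ 4800 * β^3 := by nlinarith [hβ3, hβ0]
    _ = 4800 * π^3 * h⁻¹^3 := by
        rw [hβdef]
        field_simp
end
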